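/- A finite-index subgroup of a finitely presented group is finitely presented. -/

import Mathlib

/-- A group is finitely presented if it is isomorphic to a quotient of a finitely
generated free group by the normal closure of a finite set of relations. -/
def FinPresented (G : Type) [Group G] : Prop :=
  ∃ (n : ℕ) (rels : Finset (FreeGroup (Fin n))),
    Nonempty (PresentedGroup (rels : Set (FreeGroup (Fin n))) ≃* G)

/-- A finitely generated free group has finitely many basis elements. -/
lemma FreeGroup.finite_of_fg (β : Type) [Group.FG (FreeGroup β)] : Finite β := by
  have h1 : Group.FG (Abelianization (FreeGroup β)) :=
    Group.fg_of_surjective (f := Abelianization.of)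
      (fun x => Quotient.inductionOn' x fun a => ⟨a, rfl⟩)
  have h2 : AddGroup.FG (FreeAbelianGroup β) := GroupFG.iff_add_fg.mp h1
  have h3 : Module.Finite ℤ (FreeAbelianGroup β) := Module.Finite.iff_addGroup_fg.mpr h2
  exact Module.Finite.finite_basis (FreeAbelianGroup.basis β)

instance (n : ℕ) : Group.FG (FreeGroup (Fin n)) := by
  rw [Group.fg_iff]
  exact ⟨Set.range FreeGroup.of, FreeGroup.closure_range_of _, Set.finite_range _⟩

set_option maxHeartbeats 2000000 in
theorem finiteIndex_subgroup_finitely_presented {G : Type} [Group G]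
    (hG : FinPresented G) (K : Subgroup G) (hK : K.index ≠ 0) :
    FinPresented K := by
  classical
  obtain ⟨n, rels, ⟨e⟩⟩ := hG
  set N : Subgroup (FreeGroup (Fin n)) :=
    Subgroup.normalClosure (rels : Set (FreeGroup (Fin n))) with hN
  let π : FreeGroup (Fin n) →* G := e.toMonoidHom.comp (PresentedGroup.mk (rels : Set (FreeGroup (Fin n))))
  have hπsurj : Function.Surjective π :=
    e.surjective.comp (PresentedGroup.mk_surjective _)
  have hπker : ∀ x, π x = 1 ↔ x ∈ N := by
    intro x
    show e (PresentedGroup.mk _ x) = 1 ↔ _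
    rw [← map_one e, e.injective.eq_iff]
    exact QuotientGroup.eq_one_iff x
  set H : Subgroup (FreeGroup (Fin n)) := K.comap π with hH
  have hNH : N ≤ H := fun x hx => by
    simp only [hH, Subgroup.mem_comap, (hπker x).mpr hx]; exact one_mem K
  have hHidx : H.index = K.index := Subgroup.index_comap_of_surjective K hπsurj
  haveI : H.FiniteIndex := ⟨by rw [hHidx]; exact hK⟩
  haveI : Finite (FreeGroup (Fin n) ⧸ H) := H.finite_quotient_of_finiteIndex
  -- transversal
  let c : FreeGroup (Fin n) ⧸ H → FreeGroup (Fin n) := Quotient.out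
  have hc : ∀ q : FreeGroup (Fin n) ⧸ H, (QuotientGroup.mk (c q) : _ ⧸ H) = q :=
    fun q => QuotientGroup.out_eq' q
  haveI : N.Normal := Subgroup.normalClosure_normal
  -- the relator set inside H
  have hSmem : ∀ (q : FreeGroup (Fin n) ⧸ H) (r : FreeGroup (Fin n)), r ∈ rels →
      (c q)⁻¹ * r * c q ∈ H := by
    intro q r hr
    have hrN : r ∈ N := Subgroup.subset_normalClosure hr
    have : (c q)⁻¹ * r * ((c q)⁻¹)⁻¹ ∈ N := ‹N.Normal›.conj_mem r hrN ((c q)⁻¹)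
    rw [inv_inv] at this
    exact hNH this
  let S : Set H := Set.range (fun p : (FreeGroup (Fin n) ⧸ H) × rels =>
    (⟨(c p.1)⁻¹ * p.2 * c p.1, hSmem p.1 p.2 p.2.2⟩ : H))
  have hSfin : S.Finite := Set.finite_range _
  -- key: normal closure of S in H is N.subgroupOf H
  haveI : (N.subgroupOf H).Normal := ‹N.Normal›.subgroupOf H
  have key : Subgroup.normalClosure S = N.subgroupOf H := by
    apply le_antisymm
    · apply Subgroup.normalClosure_le_normal
      rintro x ⟨⟨q, r⟩, rfl⟩
      show (c q)⁻¹ * (r : FreeGroup (Fin n)) * c q ∈ N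
      have hrN : (r : FreeGroup (Fin n)) ∈ N := Subgroup.subset_normalClosure r.2
      have := ‹N.Normal›.conj_mem _ hrN ((c q)⁻¹)
      rwa [inv_inv] at this
    · -- N ≤ image
      intro x hx
      have hx' : (x : FreeGroup (Fin n)) ∈ N := hx
      -- show ↑x ∈ map H.subtype (normalClosure S)
      have hmap : N ≤ Subgroup.map H.subtype (Subgroup.normalClosure S) := by
        rw [hN, Subgroup.normalClosure]
        rw [Subgroup.closure_le]
        intro g hg
        rw [Group.mem_conjugatesOfSet_iff] at hg
        obtain ⟨r, hr, hconj⟩ := hg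
        obtain ⟨u, hu⟩ := hconj
        set f : FreeGroup (Fin n) := ↑u with hfdef
        have hg : g = f * r * f⁻¹ := eq_mul_inv_iff_mul_eq.mpr hu.symm
        set q : FreeGroup (Fin n) ⧸ H := QuotientGroup.mk f⁻¹ with hq
        have hmem : (c q)⁻¹ * f⁻¹ ∈ H := by
          rw [← QuotientGroup.eq]
          rw [hc q]
        set h : H := ⟨(c q)⁻¹ * f⁻¹, hmem⟩ with hh
        have hs : (⟨(c q)⁻¹ * r * c q, hSmem q r hr⟩ : H) ∈ Subgroup.normalClosure S :=
          Subgroup.subset_normalClosure ⟨(q, ⟨r, hr⟩), rfl⟩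
        have hconj2 : h⁻¹ * (⟨(c q)⁻¹ * r * c q, hSmem q r hr⟩ : H) * h ∈
            Subgroup.normalClosure S := by
          have := Subgroup.normalClosure_normal.conj_mem _ hs h⁻¹
          rwa [inv_inv] at this
        refine ⟨_, hconj2, ?_⟩
        show ((h⁻¹ * _ * h : H) : FreeGroup (Fin n)) = g
        push_cast
        simp only [hh, hg]
        group
      obtain ⟨y, hy, hyx⟩ := hmap hx'
      have : y = x := Subtype.ext hyx
      rwa [this] at hy
  -- K is isomorphic to H ⧸ N.subgroupOf H
  let φ : H →* K := (π.domRestrict H).codRestrict K (fun x => x.2)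
  have hφsurj : Function.Surjective φ := by
    intro k
    obtain ⟨f, hf⟩ := hπsurj k
    have hfH : f ∈ H := by rw [hH]; simp [Subgroup.mem_comap, hf]
    exact ⟨⟨f, hfH⟩, Subtype.ext hf⟩
  have hφker : φ.ker = N.subgroupOf H := by
    ext x
    simp only [MonoidHom.mem_ker, Subgroup.mem_subgroupOf]
    constructor
    · intro hx
      have : π x = 1 := congrArg Subtype.val hx
      exact (hπker x).mp this
    · intro hx
      exact Subtype.ext ((hπker x).mpr hx)
  have key2 : Subgroup.normalClosure S = φ.ker := key.trans hφker.symm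
  -- H is a finitely generated free group
  haveI : IsFreeGroup H := inferInstance
  haveI : Group.FG H := Subgroup.fg_of_index_ne_zero H
  haveI : Group.FG (FreeGroup (IsFreeGroup.Generators H)) :=
    Group.fg_of_surjective (f := (IsFreeGroup.toFreeGroup H).toMonoidHom)
      (IsFreeGroup.toFreeGroup H).surjective
  haveI : Finite (IsFreeGroup.Generators H) := FreeGroup.finite_of_fg _
  obtain ⟨m, ⟨eβ⟩⟩ := Finite.exists_equiv_fin (IsFreeGroup.Generators H)
  let χ : FreeGroup (Fin m) ≃* H :=
    (FreeGroup.freeGroupCongr eβ.symm).trans (IsFreeGroup.toFreeGroup H).symm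
  let rels' : Set (FreeGroup (Fin m)) := ⇑χ.symm '' S
  have hrels'fin : rels'.Finite := hSfin.image _
  refine ⟨m, hrels'fin.toFinset, ⟨?_⟩⟩
  have hcoe : (hrels'fin.toFinset : Set (FreeGroup (Fin m))) = rels' := hrels'fin.coe_toFinset
  have hmapnc : (Subgroup.normalClosure (hrels'fin.toFinset : Set (FreeGroup (Fin m)))).map
      χ.toMonoidHom = Subgroup.normalClosure S := by
    rw [hcoe, Subgroup.map_normalClosure _ _ χ.surjective]
    congr 1
    rw [← Set.image_comp]
    simp [rels']
  let e2 : PresentedGroup (hrels'fin.toFinset : Set (FreeGroup (Fin m))) ≃*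
      H ⧸ Subgroup.normalClosure S :=
    QuotientGroup.congr _ _ χ hmapnc
  have e3 : (H ⧸ Subgroup.normalClosure S) ≃* K :=
    (QuotientGroup.quotientMulEquivOfEq key2).trans
      (QuotientGroup.quotientKerEquivOfSurjective φ hφsurj)
  exact e2.trans e3
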